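/- The minimum distance between points of distinct cosets D3 + tᵢ and D3 + tⱼ in ℝ^3 is: 1 when {i,j} differ by 2 mod 4 (opposite cosets, e.g., t₀ and t₂), and √3/2 when they differ by 1 mod 4 (adjacent cosets, e.g., t₀ and t₁). Moreover, the minimum distance within a single coset D3 + tᵢ is √2. -/

import Mathlib

/-- The D3 root lattice: integer vectors with even coordinate sum. -/
def D3 : Set (Fin 3 → ℝ) :=
  {x | ∃ a : Fin 3 → ℤ, (∀ i, x i = a i) ∧ Even (a 0 + a 1 + a 2)}

/-- The four coset representatives of `D3` in its dual `D3*`. -/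
noncomputable def t : Fin 4 → (Fin 3 → ℝ) :=
  ![![0,0,0], ![1/2,1/2,1/2], ![0,0,1], ![1/2,1/2,-(1/2)]]

/-- The coset `D3 + t j`. -/
def coset (j : Fin 4) : Set (Fin 3 → ℝ) := {v | ∃ x ∈ D3, v = x + t j}

/-- Euclidean distance in `ℝ^3`. -/
noncomputable def edist3 (u v : Fin 3 → ℝ) : ℝ := Real.sqrt (∑ i, (u i - v i)^2)

lemma mem_coset {j : Fin 4} {a : Fin 3 → ℝ} (h : a ∈ coset j) :
    ∃ p : Fin 3 → ℤ, Even (p 0 + p 1 + p 2) ∧ ∀ k, a k = p k + t j k := by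
  obtain ⟨x, ⟨p, hp, he⟩, rfl⟩ := h
  exact ⟨p, he, fun k => by simp [hp k]⟩

lemma mem_coset_of (j : Fin 4) (p : Fin 3 → ℤ) (h : Even (p 0 + p 1 + p 2)) :
    ((fun k => (p k : ℝ)) + t j) ∈ coset j :=
  ⟨_, ⟨p, fun _ => rfl, h⟩, rfl⟩

lemma intvec_odd (x y z : ℤ) (h : Odd (x + y + z)) : (1:ℤ) ≤ x^2 + y^2 + z^2 := by
  by_contra hlt
  push_neg at hlt
  have hx : x^2 = 0 := by nlinarith [sq_nonneg x, sq_nonneg y, sq_nonneg z]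
  have hy : y^2 = 0 := by nlinarith [sq_nonneg x, sq_nonneg y, sq_nonneg z]
  have hz : z^2 = 0 := by nlinarith [sq_nonneg x, sq_nonneg y, sq_nonneg z]
  have hx0 : x = 0 := by nlinarith
  have hy0 : y = 0 := by nlinarith
  have hz0 : z = 0 := by nlinarith
  rcases h with ⟨k, hk⟩
  omega

lemma intvec_even (x y z : ℤ) (h : Even (x + y + z)) (hne : ¬(x = 0 ∧ y = 0 ∧ z = 0)) :
    (2:ℤ) ≤ x^2 + y^2 + z^2 := by
  have h1 : (1:ℤ) ≤ x^2 + y^2 + z^2 := by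
    have : x ≠ 0 ∨ y ≠ 0 ∨ z ≠ 0 := by tauto
    rcases this with hx | hy | hz
    · rcases lt_or_gt_of_ne hx with h'|h'
      · have : x ≤ -1 := by omega
        nlinarith [sq_nonneg y, sq_nonneg z]
      · have : 1 ≤ x := by omega
        nlinarith [sq_nonneg y, sq_nonneg z]
    · rcases lt_or_gt_of_ne hy with h'|h'
      · have : y ≤ -1 := by omega
        nlinarith [sq_nonneg x, sq_nonneg z]
      · have : 1 ≤ y := by omega
        nlinarith [sq_nonneg x, sq_nonneg z]
    · rcases lt_or_gt_of_ne hz with h'|h'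
      · have : z ≤ -1 := by omega
        nlinarith [sq_nonneg x, sq_nonneg y]
      · have : 1 ≤ z := by omega
        nlinarith [sq_nonneg x, sq_nonneg y]
  have hpar : Even (x^2 + y^2 + z^2) := by
    have h2 : Even ((x-1)*x) := by
      have := Int.even_mul_succ_self (x-1); simpa using this
    have h3 : Even ((y-1)*y) := by
      have := Int.even_mul_succ_self (y-1); simpa using this
    have h4 : Even ((z-1)*z) := by
      have := Int.even_mul_succ_self (z-1); simpa using this
    have : x^2 + y^2 + z^2 = ((x-1)*x + (y-1)*y + (z-1)*z) + (x+y+z) := by ring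
    rw [this]
    exact ((h2.add h3).add h4).add h
  rcases hpar with ⟨k, hk⟩
  omega

lemma half_sq (c m : ℤ) (hm : Odd m) : (1/4:ℝ) ≤ ((c:ℝ) + m/2)^2 := by
  obtain ⟨k, rfl⟩ := hm
  have h2 : (1:ℤ) ≤ (2*c + (2*k+1))^2 := by
    rcases le_or_gt (2*c + (2*k+1)) 0 with h|h
    · have : 2*c + (2*k+1) ≤ -1 := by omega
      nlinarith
    · have : 1 ≤ 2*c + (2*k+1) := by omega
      nlinarith
  have h3 : (1:ℝ) ≤ ((2*c + (2*k+1) : ℤ):ℝ)^2 := by exact_mod_cast h2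
  push_cast at h3 ⊢
  nlinarith

lemma sqrt34 : Real.sqrt 3 / 2 = Real.sqrt (3/4) := by
  rw [show (3/4:ℝ) = (Real.sqrt 3 / 2)^2 by
    rw [div_pow, Real.sq_sqrt (by norm_num : (3:ℝ) ≥ 0)]; norm_num]
  rw [Real.sqrt_sq (by positivity)]

lemma opp_lb (i j : Fin 4) (m : Fin 3 → ℤ) (hodd : Odd (m 0 + m 1 + m 2))
    (ht : ∀ k, t i k - t j k = (m k : ℝ)) :
    ∀ a ∈ coset i, ∀ b ∈ coset j, 1 ≤ edist3 a b := by
  intro a ha b hb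
  obtain ⟨p, hp, hap⟩ := mem_coset ha
  obtain ⟨q, hq, hbq⟩ := mem_coset hb
  have e1 : ∀ k, a k - b k = ((p k - q k + m k : ℤ) : ℝ) := by
    intro k
    have := ht k
    rw [hap, hbq]; push_cast; linarith
  have hc : Odd ((p 0 - q 0 + m 0) + (p 1 - q 1 + m 1) + (p 2 - q 2 + m 2)) := by
    obtain ⟨u, hu⟩ := hp; obtain ⟨v, hv⟩ := hq; obtain ⟨w, hw⟩ := hodd
    exact ⟨u - v + w, by omega⟩
  have key := intvec_odd _ _ _ hc
  unfold edist3
  rw [show (1:ℝ) = Real.sqrt 1 by simp]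
  apply Real.sqrt_le_sqrt
  rw [Fin.sum_univ_three, e1 0, e1 1, e1 2]
  have : ((1:ℤ):ℝ) ≤ (((p 0 - q 0 + m 0):ℤ):ℝ)^2 + (((p 1 - q 1 + m 1):ℤ):ℝ)^2
      + (((p 2 - q 2 + m 2):ℤ):ℝ)^2 := by exact_mod_cast key
  push_cast at this ⊢
  linarith

lemma adj_lb (i j : Fin 4) (m : Fin 3 → ℤ) (hm : ∀ k, Odd (m k))
    (ht : ∀ k, t i k - t j k = (m k : ℝ)/2) :
    ∀ a ∈ coset i, ∀ b ∈ coset j, Real.sqrt 3 / 2 ≤ edist3 a b := by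
  intro a ha b hb
  obtain ⟨p, _, hap⟩ := mem_coset ha
  obtain ⟨q, _, hbq⟩ := mem_coset hb
  have e1 : ∀ k, a k - b k = ((p k - q k : ℤ) : ℝ) + (m k : ℝ)/2 := by
    intro k
    have := ht k
    rw [hap, hbq]; push_cast; linarith
  unfold edist3
  rw [sqrt34]
  apply Real.sqrt_le_sqrt
  rw [Fin.sum_univ_three, e1 0, e1 1, e1 2]
  have h0 := half_sq (p 0 - q 0) (m 0) (hm 0)
  have h1 := half_sq (p 1 - q 1) (m 1) (hm 1)
  have h2 := half_sq (p 2 - q 2) (m 2) (hm 2)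
  linarith

lemma same_lb (i : Fin 4) :
    ∀ a ∈ coset i, ∀ b ∈ coset i, a ≠ b → Real.sqrt 2 ≤ edist3 a b := by
  intro a ha b hb hne
  obtain ⟨p, hp, hap⟩ := mem_coset ha
  obtain ⟨q, hq, hbq⟩ := mem_coset hb
  have e1 : ∀ k, a k - b k = ((p k - q k : ℤ) : ℝ) := by
    intro k; rw [hap, hbq]; push_cast; ring
  have hc : Even ((p 0 - q 0) + (p 1 - q 1) + (p 2 - q 2)) := by
    obtain ⟨u, hu⟩ := hp; obtain ⟨v, hv⟩ := hq
    exact ⟨u - v, by omega⟩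
  have hne' : ¬(p 0 - q 0 = 0 ∧ p 1 - q 1 = 0 ∧ p 2 - q 2 = 0) := by
    rintro ⟨h0, h1, h2⟩
    apply hne
    funext k
    have hk : p k = q k := by
      fin_cases k <;> simp_all <;> omega
    rw [hap, hbq, hk]
  have key := intvec_even _ _ _ hc hne'
  unfold edist3
  rw [show Real.sqrt 2 = Real.sqrt ((2:ℤ):ℝ) by norm_num]
  apply Real.sqrt_le_sqrt
  rw [Fin.sum_univ_three, e1 0, e1 1, e1 2]
  have : ((2:ℤ):ℝ) ≤ (((p 0 - q 0):ℤ):ℝ)^2 + (((p 1 - q 1):ℤ):ℝ)^2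
      + (((p 2 - q 2):ℤ):ℝ)^2 := by exact_mod_cast key
  linarith

theorem stmt16 :
    (∀ i : Fin 4, (∀ a ∈ coset i, ∀ b ∈ coset (i + 2), 1 ≤ edist3 a b) ∧
      (∃ a ∈ coset i, ∃ b ∈ coset (i + 2), edist3 a b = 1)) ∧
    (∀ i j : Fin 4, (j = i + 1 ∨ i = j + 1) →
      (∀ a ∈ coset i, ∀ b ∈ coset j, Real.sqrt 3 / 2 ≤ edist3 a b) ∧
      (∃ a ∈ coset i, ∃ b ∈ coset j, edist3 a b = Real.sqrt 3 / 2)) ∧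
    (∀ i : Fin 4, (∀ a ∈ coset i, ∀ b ∈ coset i, a ≠ b → Real.sqrt 2 ≤ edist3 a b) ∧
      (∃ a ∈ coset i, ∃ b ∈ coset i, a ≠ b ∧ edist3 a b = Real.sqrt 2)) := by
  refine ⟨fun i => ?_, fun i j hij => ?_, fun i => ?_⟩
  · fin_cases i
    · refine ⟨opp_lb _ _ ![0,0,-1] ⟨-1, by simp⟩
        (fun k => by fin_cases k <;> simp [t] <;> norm_num), ?_⟩
      refine ⟨_, mem_coset_of _ ![0,0,0] (by decide), _,
        mem_coset_of _ ![0,0,0] (by decide), ?_⟩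
      unfold edist3; rw [Fin.sum_univ_three]; simp [t] <;> norm_num
    · refine ⟨opp_lb _ _ ![0,0,1] ⟨0, by simp⟩
        (fun k => by fin_cases k <;> simp [t] <;> norm_num), ?_⟩
      refine ⟨_, mem_coset_of _ ![0,0,0] (by decide), _,
        mem_coset_of _ ![0,0,0] (by decide), ?_⟩
      unfold edist3; rw [Fin.sum_univ_three]; simp [t] <;> norm_num
    · refine ⟨opp_lb 2 0 ![0,0,1] ⟨0, by simp⟩
        (fun k => by fin_cases k <;> simp [t] <;> norm_num), ?_⟩
      refine ⟨_, mem_coset_of 2 ![0,0,0] (by decide), _,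
        mem_coset_of 0 ![0,0,0] (by decide), ?_⟩
      unfold edist3; rw [Fin.sum_univ_three]; simp [t] <;> norm_num
    · refine ⟨opp_lb 3 1 ![0,0,-1] ⟨-1, by simp⟩
        (fun k => by fin_cases k <;> simp [t] <;> norm_num), ?_⟩
      refine ⟨_, mem_coset_of 3 ![0,0,0] (by decide), _,
        mem_coset_of 1 ![0,0,0] (by decide), ?_⟩
      unfold edist3; rw [Fin.sum_univ_three]; simp [t] <;> norm_num
  · fin_cases i <;> fin_cases j
    -- i = 0
    · exact absurd hij (by decide)
    · -- (0,1) m = (-1,-1,-1)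
      refine ⟨adj_lb _ _ ![-1,-1,-1] (fun k => by fin_cases k <;> decide)
        (fun k => by fin_cases k <;> simp [t] <;> norm_num), ?_⟩
      refine ⟨_, mem_coset_of _ ![0,0,0] (by decide), _,
        mem_coset_of _ ![0,0,0] (by decide), ?_⟩
      rw [sqrt34]; unfold edist3; rw [Fin.sum_univ_three]; simp [t] <;> norm_num
    · exact absurd hij (by decide)
    · -- (0,3) m = (-1,-1,1)
      refine ⟨adj_lb _ _ ![-1,-1,1] (fun k => by fin_cases k <;> decide)
        (fun k => by fin_cases k <;> simp [t] <;> norm_num), ?_⟩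
      refine ⟨_, mem_coset_of _ ![0,0,0] (by decide), _,
        mem_coset_of _ ![0,0,0] (by decide), ?_⟩
      rw [sqrt34]; unfold edist3; rw [Fin.sum_univ_three]; simp [t] <;> norm_num
    -- i = 1
    · -- (1,0) m = (1,1,1)
      refine ⟨adj_lb _ _ ![1,1,1] (fun k => by fin_cases k <;> decide)
        (fun k => by fin_cases k <;> simp [t] <;> norm_num), ?_⟩
      refine ⟨_, mem_coset_of _ ![0,0,0] (by decide), _,
        mem_coset_of _ ![0,0,0] (by decide), ?_⟩
      rw [sqrt34]; unfold edist3; rw [Fin.sum_univ_three]; simp [t] <;> norm_num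
    · exact absurd hij (by decide)
    · -- (1,2) m = (1,1,-1)
      refine ⟨adj_lb _ _ ![1,1,-1] (fun k => by fin_cases k <;> decide)
        (fun k => by fin_cases k <;> simp [t] <;> norm_num), ?_⟩
      refine ⟨_, mem_coset_of _ ![0,0,0] (by decide), _,
        mem_coset_of _ ![0,0,0] (by decide), ?_⟩
      rw [sqrt34]; unfold edist3; rw [Fin.sum_univ_three]; simp [t] <;> norm_num
    · exact absurd hij (by decide)
    -- i = 2
    · exact absurd hij (by decide)
    · -- (2,1) m = (-1,-1,1)
      refine ⟨adj_lb _ _ ![-1,-1,1] (fun k => by fin_cases k <;> decide)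
        (fun k => by fin_cases k <;> simp [t] <;> norm_num), ?_⟩
      refine ⟨_, mem_coset_of _ ![0,0,0] (by decide), _,
        mem_coset_of _ ![0,0,0] (by decide), ?_⟩
      rw [sqrt34]; unfold edist3; rw [Fin.sum_univ_three]; simp [t] <;> norm_num
    · exact absurd hij (by decide)
    · -- (2,3) m = (-1,-1,3); witness q = (0,0,2)
      refine ⟨adj_lb _ _ ![-1,-1,3] (fun k => by fin_cases k <;> decide)
        (fun k => by fin_cases k <;> simp [t] <;> norm_num), ?_⟩
      refine ⟨_, mem_coset_of _ ![0,0,0] (by decide), _,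
        mem_coset_of _ ![0,0,2] (by decide), ?_⟩
      rw [sqrt34]; unfold edist3; rw [Fin.sum_univ_three]; simp [t] <;> norm_num
    -- i = 3
    · -- (3,0) m = (1,1,-1)
      refine ⟨adj_lb _ _ ![1,1,-1] (fun k => by fin_cases k <;> decide)
        (fun k => by fin_cases k <;> simp [t] <;> norm_num), ?_⟩
      refine ⟨_, mem_coset_of _ ![0,0,0] (by decide), _,
        mem_coset_of _ ![0,0,0] (by decide), ?_⟩
      rw [sqrt34]; unfold edist3; rw [Fin.sum_univ_three]; simp [t] <;> norm_num
    · exact absurd hij (by decide)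
    · -- (3,2) m = (1,1,-3); witness p = (0,0,2)
      refine ⟨adj_lb _ _ ![1,1,-3] (fun k => by fin_cases k <;> decide)
        (fun k => by fin_cases k <;> simp [t] <;> norm_num), ?_⟩
      refine ⟨_, mem_coset_of _ ![0,0,2] (by decide), _,
        mem_coset_of _ ![0,0,0] (by decide), ?_⟩
      rw [sqrt34]; unfold edist3; rw [Fin.sum_univ_three]; simp [t] <;> norm_num
    · exact absurd hij (by decide)
  · refine ⟨same_lb i, ?_⟩
    refine ⟨_, mem_coset_of i ![0,0,0] (by decide), _,
      mem_coset_of i ![1,1,0] (by decide), ?_, ?_⟩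
    · intro h
      have := congrFun h 0
      simp [Pi.add_apply] at this
    · unfold edist3; rw [Fin.sum_univ_three]
      simp [Pi.add_apply]
      norm_num
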